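/- Let m, g, η > 0 and assume the viability condition 1 + sqrt(4·g²·η² + m²) > g·(η² + 1) + m. Then there exists exactly one tuple (N1^a, N1^A, N2^a, N2^A, δ^a, δ^A, δ) ∈ ℝ⁷ with N1^a, N1^A, N2^a, N2^A > 0 such that, together with Z = 0, it solves the eight-equation symmetric stationary limit system described in the context. Moreover this solution satisfies N1^a = N2^A, N2^a = N1^A, and δ^A = δ^a. -/

import Mathlib

/-- The symmetric stationary limit system with parameters m, g, η, unknowns
(N1a, N1A, N2a, N2A, δa, δA, δ, Z). -/
def SymSys (m g eta N1a N1A N2a N2A da dA d Z : ℝ) : Prop :=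
  N1a - (N1A + N1a) * N1a - g * (Z - eta + 1) ^ 2 * N1a + m * (N2a - N1a) = 0 ∧
  N1A - (N1A + N1a) * N1A - g * (Z + eta + 1) ^ 2 * N1A + m * (N2A - N1A) = 0 ∧
  N2a - (N2A + N2a) * N2a - g * (Z - eta - 1) ^ 2 * N2a + m * (N1a - N2a) = 0 ∧
  N2A - (N2A + N2a) * N2A - g * (Z + eta - 1) ^ 2 * N2A + m * (N1A - N2A) = 0 ∧
  2 * g - m * da * (N2a / N1a + N1a / N2a)
    + ((dA - da) / 4) * (N2A / (N2a + N2A) + N1A / (N1a + N1A))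
    + (d / 2) * (N2A / (N2a + N2A) - N1A / (N1a + N1A)) = 0 ∧
  2 * g - m * dA * (N2A / N1A + N1A / N2A)
    + ((da - dA) / 4) * (N2a / (N2a + N2A) + N1a / (N1a + N1A))
    + (d / 2) * (N1a / (N1a + N1A) - N2a / (N2a + N2A)) = 0 ∧
  -d / 2 - 2 * g * eta
    + m * ((dA / 2) * (N2A / N1A - N1A / N2A) - (da / 2) * (N2a / N1a - N1a / N2a)) = 0 ∧
  -2 * g * Z
    + m * ((da / 2) * (N2a / N1a - N1a / N2a) + (dA / 2) * (N2A / N1A - N1A / N2A))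
    + ((dA - da) / 4) * (N2A / (N2A + N2a) - N1A / (N1A + N1a))
    + (d / 2) * (N1A / (N1A + N1a) + N2A / (N2A + N2a) - 1) = 0

/-- Equation 1 (and 4) of the system at the symmetric candidate. -/
lemma symEx1 (m g eta r s x y : ℝ) (hg : 0 < g) (heta : 0 < eta)
    (hr2 : r ^ 2 = 4 * g ^ 2 * eta ^ 2 + m ^ 2)
    (hs : s = 1 - g * (eta ^ 2 + 1) - m + r)
    (hx : x = s * (r + 2 * g * eta - m) / (4 * g * eta))
    (hy : y = s * (2 * g * eta + m - r) / (4 * g * eta)) :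
    x - (y + x) * x - g * (0 - eta + 1) ^ 2 * x + m * (y - x) = 0 := by
  subst hs hx hy
  have h4 : (4 : ℝ) * g * eta ≠ 0 := by positivity
  field_simp
  linear_combination (4 * g * eta * (-1 - r + g + g * eta ^ 2 + m)) * hr2

/-- Equation 2 (and 3) of the system at the symmetric candidate. -/
lemma symEx2 (m g eta r s x y : ℝ) (hg : 0 < g) (heta : 0 < eta)
    (hr2 : r ^ 2 = 4 * g ^ 2 * eta ^ 2 + m ^ 2)
    (hs : s = 1 - g * (eta ^ 2 + 1) - m + r)
    (hx : x = s * (r + 2 * g * eta - m) / (4 * g * eta))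
    (hy : y = s * (2 * g * eta + m - r) / (4 * g * eta)) :
    y - (y + x) * y - g * (0 + eta + 1) ^ 2 * y + m * (x - y) = 0 := by
  subst hs hx hy
  have h4 : (4 : ℝ) * g * eta ≠ 0 := by positivity
  field_simp
  linear_combination (4 * g * eta * (1 + r - g - g * eta ^ 2 - m)) * hr2

set_option maxHeartbeats 2000000 in
/-- Equations 5-8 of the system at any symmetric configuration. -/
lemma symEx5678 (m g eta X Y da d : ℝ) (hm : m ≠ 0) (hX : X ≠ 0) (hY : Y ≠ 0)
    (hXY : X + Y ≠ 0)
    (hda : da = g * (1 - eta * (X - Y) / (X + Y)) / m)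
    (hd : d = -4 * g * eta + 2 * m * (X / Y - Y / X) * da) :
    (2 * g - m * da * (Y / X + X / Y)
      + ((da - da) / 4) * (X / (Y + X) + Y / (X + Y))
      + (d / 2) * (X / (Y + X) - Y / (X + Y)) = 0) ∧
    (2 * g - m * da * (X / Y + Y / X)
      + ((da - da) / 4) * (Y / (Y + X) + X / (X + Y))
      + (d / 2) * (X / (X + Y) - Y / (Y + X)) = 0) ∧
    (-d / 2 - 2 * g * eta
      + m * ((da / 2) * (X / Y - Y / X) - (da / 2) * (Y / X - X / Y)) = 0) ∧
    (-2 * g * 0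
      + m * ((da / 2) * (Y / X - X / Y) + (da / 2) * (X / Y - Y / X))
      + ((da - da) / 4) * (X / (X + Y) - Y / (Y + X))
      + (d / 2) * (Y / (Y + X) + X / (X + Y) - 1) = 0) := by
  have hYX : Y + X = X + Y := add_comm Y X
  subst hd hda
  rw [hYX]
  refine ⟨by field_simp; ring, by field_simp; ring, by field_simp; ring, by field_simp; ring⟩

/-- Linear-algebra core for uniqueness of (δa, δA, δ). -/
lemma linCore (m K Q W u v w : ℝ) (hm : 0 < m) (hK : 0 < K) (hF2 : K - Q * W = 2)
    (A1 : -(m * u * K) + (v - u) / 4 + (w / 2) * W = 0)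
    (A2 : -(m * v * K) + (u - v) / 4 + (w / 2) * W = 0)
    (A3 : -w / 2 + (m * Q / 2) * (u + v) = 0) :
    u = 0 ∧ v = 0 ∧ w = 0 := by
  have hMK : 0 < m * K + 1 / 2 := by positivity
  have h1 : (u - v) * (m * K + 1 / 2) = 0 := by linear_combination A2 - A1
  have huv : u = v := by
    rcases mul_eq_zero.mp h1 with h | h
    · linarith
    · linarith
  subst huv
  have h3 : u * (2 * m) = 0 := by
    linear_combination (-1 : ℝ) * A1 - W * A3 - (m * u) * hF2
  have hu : u = 0 := by
    rcases mul_eq_zero.mp h3 with h | h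
    · exact h
    · linarith
  subst hu
  refine ⟨rfl, rfl, by linarith⟩

/-- Uniqueness of (δa, δA, δ) given the symmetric N-values. -/
lemma uniqD (m g eta X Y da dA d da' dA' d' : ℝ) (hm : 0 < m) (hX : 0 < X) (hY : 0 < Y)
    (e5 : 2 * g - m * da * (Y / X + X / Y)
      + ((dA - da) / 4) * (X / (Y + X) + Y / (X + Y))
      + (d / 2) * (X / (Y + X) - Y / (X + Y)) = 0)
    (e6 : 2 * g - m * dA * (X / Y + Y / X)
      + ((da - dA) / 4) * (Y / (Y + X) + X / (X + Y))
      + (d / 2) * (X / (X + Y) - Y / (Y + X)) = 0)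
    (e7 : -d / 2 - 2 * g * eta
      + m * ((dA / 2) * (X / Y - Y / X) - (da / 2) * (Y / X - X / Y)) = 0)
    (e5' : 2 * g - m * da' * (Y / X + X / Y)
      + ((dA' - da') / 4) * (X / (Y + X) + Y / (X + Y))
      + (d' / 2) * (X / (Y + X) - Y / (X + Y)) = 0)
    (e6' : 2 * g - m * dA' * (X / Y + Y / X)
      + ((da' - dA') / 4) * (Y / (Y + X) + X / (X + Y))
      + (d' / 2) * (X / (X + Y) - Y / (Y + X)) = 0)
    (e7' : -d' / 2 - 2 * g * eta
      + m * ((dA' / 2) * (X / Y - Y / X) - (da' / 2) * (Y / X - X / Y)) = 0) :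
    da' = da ∧ dA' = dA ∧ d' = d := by
  have hXY : (0 : ℝ) < X + Y := by linarith
  have hF1 : X / (X + Y) + Y / (X + Y) = 1 := by
    rw [← add_div, div_self hXY.ne']
  have hF2 : (Y / X + X / Y) - (X / Y - Y / X) * (X / (X + Y) - Y / (X + Y)) = 2 := by
    field_simp
    ring
  have hK : 0 < Y / X + X / Y := by positivity
  have hYX : Y + X = X + Y := add_comm Y X
  rw [hYX] at e5 e6 e5' e6'
  have A1 : -(m * (da - da') * (Y / X + X / Y)) + ((dA - dA') - (da - da')) / 4
      + ((d - d') / 2) * (X / (X + Y) - Y / (X + Y)) = 0 := by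
    linear_combination e5 - e5' - (((dA - dA') - (da - da')) / 4) * hF1
  have A2 : -(m * (dA - dA') * (Y / X + X / Y)) + ((da - da') - (dA - dA')) / 4
      + ((d - d') / 2) * (X / (X + Y) - Y / (X + Y)) = 0 := by
    linear_combination e6 - e6' - (((da - da') - (dA - dA')) / 4) * hF1
  have A3 : -(d - d') / 2 + (m * (X / Y - Y / X) / 2) * ((da - da') + (dA - dA')) = 0 := by
    linear_combination e7 - e7'
  obtain ⟨hu, hv, hw⟩ := linCore m (Y / X + X / Y) (X / Y - Y / X)
    (X / (X + Y) - Y / (X + Y)) (da - da') (dA - dA') (d - d') hm hK hF2 A1 A2 A3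
  exact ⟨by linarith, by linarith, by linarith⟩

/-- Uniqueness of the population sizes. -/
lemma uniqN (m g eta r a b c e : ℝ) (hm : 0 < m) (hg : 0 < g) (heta : 0 < eta)
    (hr2 : r ^ 2 = 4 * g ^ 2 * eta ^ 2 + m ^ 2) (hr0 : 0 < r)
    (ha : 0 < a) (hb : 0 < b) (hc : 0 < c) (he : 0 < e)
    (h1 : a - (b + a) * a - g * (0 - eta + 1) ^ 2 * a + m * (c - a) = 0)
    (h2 : b - (b + a) * b - g * (0 + eta + 1) ^ 2 * b + m * (e - b) = 0)
    (h3 : c - (e + c) * c - g * (0 - eta - 1) ^ 2 * c + m * (a - c) = 0)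
    (h4 : e - (e + c) * e - g * (0 + eta - 1) ^ 2 * e + m * (b - e) = 0) :
    4 * g * eta * a = (1 - g * (eta ^ 2 + 1) - m + r) * (r + 2 * g * eta - m) ∧
    4 * g * eta * b = (1 - g * (eta ^ 2 + 1) - m + r) * (2 * g * eta + m - r) ∧
    4 * g * eta * c = (1 - g * (eta ^ 2 + 1) - m + r) * (2 * g * eta + m - r) ∧
    4 * g * eta * e = (1 - g * (eta ^ 2 + 1) - m + r) * (r + 2 * g * eta - m) := by
  have h4g : (0 : ℝ) < 4 * g * eta := by positivity
  have hgeta : 0 < g * eta := mul_pos hg heta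
  have h1' : a * ((a + b) - (1 - m - g * (1 - eta) ^ 2)) = m * c := by linear_combination -h1
  have h2' : b * ((a + b) - (1 - m - g * (1 + eta) ^ 2)) = m * e := by linear_combination -h2
  have h3' : c * ((c + e) - (1 - m - g * (1 + eta) ^ 2)) = m * a := by linear_combination -h3
  have h4' : e * ((c + e) - (1 - m - g * (1 - eta) ^ 2)) = m * b := by linear_combination -h4
  have hp1 : 0 < (a + b) - (1 - m - g * (1 - eta) ^ 2) := by
    nlinarith [mul_pos hm hc, h1', ha]
  have hprodA : ((a + b) - (1 - m - g * (1 - eta) ^ 2)) *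
      ((c + e) - (1 - m - g * (1 + eta) ^ 2)) = m ^ 2 := by
    have hac : (0 : ℝ) < a * c := mul_pos ha hc
    have H : (a * c) * (((a + b) - (1 - m - g * (1 - eta) ^ 2)) *
        ((c + e) - (1 - m - g * (1 + eta) ^ 2))) = (a * c) * m ^ 2 := by
      linear_combination (a * ((a + b) - (1 - m - g * (1 - eta) ^ 2))) * h3' + (m * a) * h1'
    exact mul_left_cancel₀ hac.ne' H
  have hprodB : ((a + b) - (1 - m - g * (1 + eta) ^ 2)) *
      ((c + e) - (1 - m - g * (1 - eta) ^ 2)) = m ^ 2 := by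
    have hbe : (0 : ℝ) < b * e := mul_pos hb he
    have H : (b * e) * (((a + b) - (1 - m - g * (1 + eta) ^ 2)) *
        ((c + e) - (1 - m - g * (1 - eta) ^ 2))) = (b * e) * m ^ 2 := by
      linear_combination (b * ((a + b) - (1 - m - g * (1 + eta) ^ 2))) * h4' + (m * b) * h2'
    exact mul_left_cancel₀ hbe.ne' H
  have hst : a + b = c + e := by
    have H : 4 * g * eta * ((a + b) - (c + e)) = 0 := by
      linear_combination hprodA - hprodB
    rcases mul_eq_zero.mp H with h | h
    · exact absurd h h4g.ne'
    · linarith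
  have ht2 : ((a + b) - (1 - m - g * (1 + eta ^ 2))) ^ 2 = r ^ 2 := by
    linear_combination hprodA + ((a + b) - (1 - m - g * (1 - eta) ^ 2)) * hst - hr2
  have htr : (a + b) - (1 - m - g * (1 + eta ^ 2)) = r := by
    have hpos : 0 < (a + b) - (1 - m - g * (1 + eta ^ 2)) + r := by
      have hrw : (a + b) - (1 - m - g * (1 + eta ^ 2)) + r
          = ((a + b) - (1 - m - g * (1 - eta) ^ 2)) + 2 * (g * eta) + r := by ring
      rw [hrw]; linarith [hp1, hgeta, hr0]
    have H : ((a + b) - (1 - m - g * (1 + eta ^ 2)) - r) *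
        ((a + b) - (1 - m - g * (1 + eta ^ 2)) + r) = 0 := by
      linear_combination ht2
    rcases mul_eq_zero.mp H with h | h
    · linarith
    · linarith
  have habr : a + b = 1 - g * (eta ^ 2 + 1) - m + r := by linear_combination htr
  have hc4 : m * c = a * (r - 2 * g * eta) := by
    linear_combination (-1 : ℝ) * h1' + a * habr
  have he4 : m * e = b * (r + 2 * g * eta) := by
    linear_combination (-1 : ℝ) * h2' + b * habr
  have hsum : m * (a + b) = a * (r - 2 * g * eta) + b * (r + 2 * g * eta) := by
    linear_combination hc4 + he4 + m * hst
  have hb4 : 4 * g * eta * b = (a + b) * (2 * g * eta + m - r) := by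
    linear_combination -hsum
  have hb4' : 4 * g * eta * b = (1 - g * (eta ^ 2 + 1) - m + r) * (2 * g * eta + m - r) := by
    linear_combination hb4 + (2 * g * eta + m - r) * habr
  have ha4 : 4 * g * eta * a = (1 - g * (eta ^ 2 + 1) - m + r) * (r + 2 * g * eta - m) := by
    linear_combination (4 * g * eta) * habr - hb4'
  have hc4'' : 4 * g * eta * c = (1 - g * (eta ^ 2 + 1) - m + r) * (2 * g * eta + m - r) := by
    have H : m * (4 * g * eta * c) =
        m * ((1 - g * (eta ^ 2 + 1) - m + r) * (2 * g * eta + m - r)) := by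
      linear_combination (4 * g * eta) * hc4 + (r - 2 * g * eta) * ha4
        + (1 - g * (eta ^ 2 + 1) - m + r) * hr2
    exact mul_left_cancel₀ hm.ne' H
  have he4'' : 4 * g * eta * e = (1 - g * (eta ^ 2 + 1) - m + r) * (r + 2 * g * eta - m) := by
    have H : m * (4 * g * eta * e) =
        m * ((1 - g * (eta ^ 2 + 1) - m + r) * (r + 2 * g * eta - m)) := by
      linear_combination (4 * g * eta) * he4 + (r + 2 * g * eta) * hb4'
        - (1 - g * (eta ^ 2 + 1) - m + r) * hr2
    exact mul_left_cancel₀ hm.ne' H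
  exact ⟨ha4, hb4', hc4'', he4''⟩

set_option maxHeartbeats 1000000 in
theorem stmt_14 (m g eta : ℝ) (hm : 0 < m) (hg : 0 < g) (heta : 0 < eta)
    (hviab : 1 + Real.sqrt (4 * g ^ 2 * eta ^ 2 + m ^ 2) > g * (eta ^ 2 + 1) + m) :
    ∃ N1a N1A N2a N2A da dA d : ℝ,
      (0 < N1a ∧ 0 < N1A ∧ 0 < N2a ∧ 0 < N2A) ∧
      SymSys m g eta N1a N1A N2a N2A da dA d 0 ∧
      (N1a = N2A ∧ N2a = N1A ∧ dA = da) ∧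
      (∀ N1a' N1A' N2a' N2A' da' dA' d' : ℝ,
        (0 < N1a' ∧ 0 < N1A' ∧ 0 < N2a' ∧ 0 < N2A') →
        SymSys m g eta N1a' N1A' N2a' N2A' da' dA' d' 0 →
        N1a' = N1a ∧ N1A' = N1A ∧ N2a' = N2a ∧ N2A' = N2A ∧
          da' = da ∧ dA' = dA ∧ d' = d) := by
  have h4g : (0 : ℝ) < 4 * g * eta := by positivity
  have hC : (0 : ℝ) < 4 * g ^ 2 * eta ^ 2 + m ^ 2 := by positivity
  set r := Real.sqrt (4 * g ^ 2 * eta ^ 2 + m ^ 2) with hrdef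
  have hr2 : r ^ 2 = 4 * g ^ 2 * eta ^ 2 + m ^ 2 := Real.sq_sqrt hC.le
  have hr0 : 0 < r := Real.sqrt_pos.mpr hC
  have hgeta : 0 < g * eta := mul_pos hg heta
  have hrm : m < r := by nlinarith [hr2, hr0, hgeta, hm]
  have hr2g : 2 * g * eta < r := by nlinarith [hr2, hr0, hgeta, hm]
  have hrlt : r < 2 * g * eta + m := by nlinarith [hr2, hr0, hgeta, hm]
  set s := 1 - g * (eta ^ 2 + 1) - m + r with hsdef
  have hs0 : 0 < s := by rw [hsdef]; linarith
  set x := s * (r + 2 * g * eta - m) / (4 * g * eta) with hxdef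
  set y := s * (2 * g * eta + m - r) / (4 * g * eta) with hydef
  have hx0 : 0 < x := by
    rw [hxdef]; exact div_pos (mul_pos hs0 (by linarith)) h4g
  have hy0 : 0 < y := by
    rw [hydef]; exact div_pos (mul_pos hs0 (by linarith)) h4g
  set da := g * (1 - eta * (x - y) / (x + y)) / m with hdadef
  set d := -4 * g * eta + 2 * m * (x / y - y / x) * da with hddef
  obtain ⟨E5, E6, E7, E8⟩ :=
    symEx5678 m g eta x y da d hm.ne' hx0.ne' hy0.ne' (by positivity) hdadef hddef
  have E1 := symEx1 m g eta r s x y hg heta hr2 hsdef hxdef hydef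
  have E2 := symEx2 m g eta r s x y hg heta hr2 hsdef hxdef hydef
  have hSym : SymSys m g eta x y y x da da d 0 := by
    exact ⟨E1, E2, by linear_combination E2, by linear_combination E1, E5, E6, E7, E8⟩
  refine ⟨x, y, y, x, da, da, d, ⟨hx0, hy0, hy0, hx0⟩, hSym, ⟨rfl, rfl, rfl⟩, ?_⟩
  rintro a b c e da' dA' d' ⟨ha, hb, hc, he⟩ hS
  obtain ⟨h1, h2, h3, h4, h5, h6, h7, h8⟩ := hS
  obtain ⟨ha4, hb4, hc4, he4⟩ :=
    uniqN m g eta r a b c e hm hg heta hr2 hr0 ha hb hc he h1 h2 h3 h4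
  have haX : a = x := by
    rw [hxdef, hsdef, eq_div_iff h4g.ne']; linear_combination ha4
  have hbY : b = y := by
    rw [hydef, hsdef, eq_div_iff h4g.ne']; linear_combination hb4
  have hcY : c = y := by
    rw [hydef, hsdef, eq_div_iff h4g.ne']; linear_combination hc4
  have heX : e = x := by
    rw [hxdef, hsdef, eq_div_iff h4g.ne']; linear_combination he4
  rw [haX, hbY, hcY, heX] at h5 h6 h7
  obtain ⟨hda', hdA', hd'⟩ :=
    uniqD m g eta x y da da d da' dA' d' hm hx0 hy0 E5 E6 E7 h5 h6 h7
  exact ⟨haX, hbY, hcY, heX, hda', hdA', hd'⟩
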